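/- Let 2 ≤ k ≤ n and suppose C(k,2) < C(n,2) − n²(k−2)/(2(k−1)) (as rational numbers). Let CL_k be the Boolean function on the C(n,2) edge-indicator variables of a simple graph on vertex set [n] that outputs 1 iff the graph contains a clique on k vertices. Then the minimum certificate complexity of CL_k satisfies C_min(CL_k) = C(k,2). -/

import Mathlib

/-- A deterministic decision tree over variables indexed by `ι`:
either a leaf labeled with an output bit, or an internal node that queries
variable `i` and branches on its value (`t0` if false, `t1` if true). -/
inductive DecTree (ι : Type) where
  | leaf (b : Bool)
  | node (i : ι) (t0 t1 : DecTree ι)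

namespace DecTree

variable {ι : Type}

/-- The output of a decision tree on input `x`. -/
def eval : DecTree ι → (ι → Bool) → Bool
  | leaf b, _ => b
  | node i t0 t1, x => if x i then t1.eval x else t0.eval x

/-- The number of queries (internal nodes visited) made by a decision tree on input `x`. -/
def queries : DecTree ι → (ι → Bool) → ℕ
  | leaf _, _ => 0
  | node i t0 t1, x => 1 + (if x i then t1.queries x else t0.queries x)

/-- The depth of a decision tree: the maximum number of queries over all inputs. -/
def depth : DecTree ι → ℕ
  | leaf _ => 0
  | node _ t0 t1 => 1 + max t0.depth t1.depth

end DecTree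

/-- A decision tree `T` computes `f` if its output agrees with `f` on every input. -/
def Computes {ι : Type} (T : DecTree ι) (f : (ι → Bool) → Bool) : Prop :=
  ∀ x, T.eval x = f x

/-- `S` is a certificate for input `x` w.r.t. `f`: every input agreeing with `x`
on all coordinates in `S` has the same function value as `x`. -/
def IsCert {ι : Type} (f : (ι → Bool) → Bool) (x : ι → Bool) (S : Finset ι) : Prop :=
  ∀ y : ι → Bool, (∀ i ∈ S, y i = x i) → f y = f x

/-- The certificate complexity `C(f,x)`: the minimum size of a certificate for `x`. -/
noncomputable def certC {ι : Type} (f : (ι → Bool) → Bool) (x : ι → Bool) : ℕ :=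
  sInf {k | ∃ S : Finset ι, S.card = k ∧ IsCert f x S}

/-- The minimum certificate complexity `C_min(f) = min_x C(f,x)`. -/
noncomputable def Cmin {ι : Type} (f : (ι → Bool) → Bool) : ℕ :=
  sInf {k | ∃ x : ι → Bool, certC f x = k}

/-- The deterministic query complexity `DT(f)`: the minimum depth of a decision
tree computing `f`. -/
noncomputable def DTC {ι : Type} (f : (ι → Bool) → Bool) : ℕ :=
  sInf {d | ∃ T : DecTree ι, Computes T f ∧ T.depth ≤ d}

/-- The Hamming weight of an input. -/
def wt {n : ℕ} (x : Fin n → Bool) : ℕ :=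
  (Finset.univ.filter fun i => x i = true).card

/-- The index set of edge-indicator variables: unordered pairs of distinct
vertices of `Fin n`. -/
def Edge (n : ℕ) : Type := {e : Sym2 (Fin n) // ¬ e.IsDiag}

instance (n : ℕ) : Fintype (Edge n) := by unfold Edge; infer_instance
instance (n : ℕ) : DecidableEq (Edge n) := by unfold Edge; infer_instance

/-- The simple graph on `[n]` determined by an edge-indicator input `x`. -/
def graphOf {n : ℕ} (x : Edge n → Bool) : SimpleGraph (Fin n) :=
  SimpleGraph.fromEdgeSet {e : Sym2 (Fin n) | ∃ h : ¬ e.IsDiag, x ⟨e, h⟩ = true}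

open scoped Classical in
/-- The connectivity property as a Boolean function of the edge indicators. -/
noncomputable def CONNb (n : ℕ) (x : Edge n → Bool) : Bool :=
  decide (graphOf x).Connected

open scoped Classical in
/-- The `k`-clique property as a Boolean function of the edge indicators. -/
noncomputable def CLb (n k : ℕ) (x : Edge n → Bool) : Bool :=
  decide (∃ s : Finset (Fin n), (graphOf x).IsNClique k s)

open Finset SimpleGraph

section Turan

lemma turanGraph_edge_bound (n r : ℕ) :
    2 * (r + 1) * #(turanGraph n (r+1)).edgeFinset ≤ r * n ^ 2 := by
  set s := r + 1 with hs
  set c : ℕ → ℕ := fun i => #(univ.filter fun w : Fin n => (w : ℕ) % s = i) with hc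
  set I : Finset ℕ := (univ : Finset (Fin n)).image (fun w : Fin n => (w : ℕ) % s) with hI
  have hdeg : ∀ v : Fin n, (turanGraph n s).degree v + c ((v : ℕ) % s) = n := by
    intro v
    have hd : (turanGraph n s).degree v
        = #(univ.filter fun w : Fin n => ¬ ((w : ℕ) % s = (v : ℕ) % s)) := by
      rw [degree, neighborFinset_eq_filter]
      congr 1
      ext w
      simp only [Finset.mem_filter, Finset.mem_univ, true_and]
      show ¬((v : ℕ) % s = (w : ℕ) % s) ↔ _
      constructor <;> (intro h1 h2; exact h1 h2.symm)
    have hsplit := Finset.card_filter_add_card_filter_not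
      (s := (univ : Finset (Fin n))) (p := fun w : Fin n => (w : ℕ) % s = (v : ℕ) % s)
    rw [Finset.card_univ, Fintype.card_fin] at hsplit
    rw [hd]
    show _ + #(univ.filter fun w : Fin n => (w : ℕ) % s = (v : ℕ) % s) = n
    omega
  have hsum : 2 * #(turanGraph n s).edgeFinset + ∑ v : Fin n, c ((v : ℕ) % s) = n ^ 2 := by
    have h2 : ∑ v : Fin n, (turanGraph n s).degree v = 2 * #(turanGraph n s).edgeFinset :=
      SimpleGraph.sum_degrees_eq_twice_card_edges _
    have h3 : ∑ v : Fin n, ((turanGraph n s).degree v + c ((v : ℕ) % s))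
        = ∑ _v : Fin n, n := Finset.sum_congr rfl (fun v _ => hdeg v)
    rw [Finset.sum_add_distrib, h2] at h3
    simpa [sq] using h3
  have hfiber : ∑ v : Fin n, c ((v : ℕ) % s) = ∑ b ∈ I, c b * c b := by
    rw [← Finset.sum_fiberwise_of_maps_to (t := I) (g := fun v : Fin n => (v : ℕ) % s)
      (fun v _ => Finset.mem_image_of_mem _ (mem_univ v)) (fun v : Fin n => c ((v : ℕ) % s))]
    refine Finset.sum_congr rfl fun b _ => ?_
    rw [Finset.sum_congr rfl (fun v hv => by rw [(Finset.mem_filter.1 hv).2]),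
      Finset.sum_const, smul_eq_mul]
  have hn : ∑ b ∈ I, c b = n := by
    have := Finset.card_eq_sum_card_image (fun w : Fin n => (w : ℕ) % s) univ
    simpa [hc] using this.symm
  have hcard : #I ≤ s := by
    have : I ⊆ Finset.range s := by
      intro b hb
      obtain ⟨w, -, rfl⟩ := Finset.mem_image.1 hb
      exact Finset.mem_range.2 (Nat.mod_lt _ (by omega))
    simpa using Finset.card_le_card this
  have hcs : n ^ 2 ≤ s * ∑ b ∈ I, c b * c b := by
    calc n ^ 2 = (∑ b ∈ I, c b) ^ 2 := by rw [hn]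
    _ ≤ #I * ∑ b ∈ I, (c b) ^ 2 := sq_sum_le_card_mul_sum_sq
    _ ≤ s * ∑ b ∈ I, c b * c b := by
        simp_rw [sq]
        exact Nat.mul_le_mul_right _ hcard
  rw [hfiber] at hsum
  set E := #(turanGraph n s).edgeFinset
  set S := ∑ b ∈ I, c b * c b
  have : 2 * E ≤ r * S := by nlinarith
  nlinarith

lemma turan_bound {n r : ℕ} (G : SimpleGraph (Fin n)) [DecidableRel G.Adj]
    (h : G.CliqueFree (r + 2)) : 2 * (r + 1) * #G.edgeFinset ≤ r * n ^ 2 := by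
  obtain ⟨H, iH, hH⟩ := exists_isTuranMaximal (V := Fin n) (r := r + 1) (by omega)
  have h1 : #G.edgeFinset ≤ #H.edgeFinset := hH.2 h
  obtain ⟨φ⟩ := hH.nonempty_iso_turanGraph
  have h2 : #H.edgeFinset = #(turanGraph (Fintype.card (Fin n)) (r+1)).edgeFinset :=
    φ.card_edgeFinset_eq
  rw [Fintype.card_fin] at h2
  calc 2 * (r+1) * #G.edgeFinset ≤ 2 * (r+1) * #(turanGraph n (r+1)).edgeFinset := by
        rw [← h2]; exact Nat.mul_le_mul_left _ h1
  _ ≤ r * n ^ 2 := turanGraph_edge_bound n r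

end Turan

section Helpers

variable {n : ℕ}

lemma graphOf_adj (x : Edge n → Bool) {a b : Fin n}
    (h : ¬(s(a, b) : Sym2 (Fin n)).IsDiag) :
    (graphOf x).Adj a b ↔ x ⟨s(a, b), h⟩ = true := by
  have hab : a ≠ b := by
    intro hab; exact h (by simp [hab])
  rw [graphOf, SimpleGraph.fromEdgeSet_adj]
  constructor
  · rintro ⟨⟨h', hx⟩, -⟩; exact hx
  · intro hx; exact ⟨⟨h, hx⟩, hab⟩

lemma card_edge_univ : Fintype.card (Edge n) = n.choose 2 := by
  have := Sym2.card_subtype_not_diag (α := Fin n)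
  rw [Fintype.card_fin] at this
  exact this

open scoped Classical in
lemma card_true_edges (x : Edge n → Bool) :
    #(graphOf x).edgeFinset = #(univ.filter fun e : Edge n => x e = true) := by
  classical
  rw [← Finset.card_image_of_injective (f := fun e : Edge n => e.val) _ Subtype.val_injective]
  congr 1
  ext e
  simp only [SimpleGraph.mem_edgeFinset, Finset.mem_image, Finset.mem_filter,
    Finset.mem_univ, true_and]
  rw [graphOf, SimpleGraph.edgeSet_fromEdgeSet]
  constructor
  · rintro ⟨⟨h', hx⟩, hd⟩
    exact ⟨⟨e, h'⟩, hx, rfl⟩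
  · rintro ⟨⟨e', h'⟩, hx, rfl⟩
    exact ⟨⟨h', hx⟩, h'⟩

end Helpers

lemma cert_lower (n k : ℕ) (hk : 2 ≤ k) (hkn : k ≤ n)
    (hsmall : (k.choose 2 : ℚ) <
      (n.choose 2 : ℚ) - (n : ℚ) ^ 2 * ((k : ℚ) - 2) / (2 * ((k : ℚ) - 1)))
    {x : Edge n → Bool} {S : Finset (Edge n)} (hS : IsCert (CLb n k) x S) :
    k.choose 2 ≤ #S := by
  classical
  by_cases hx : CLb n k x = true
  · -- 1-input: the restricted-to-S graph still has a clique, all inside S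
    set y : Edge n → Bool := fun e => if e ∈ S then x e else false with hy
    have hyx : CLb n k y = true := by
      rw [hS y (fun e he => by simp [hy, he]), hx]
    simp only [CLb, decide_eq_true_eq] at hyx
    obtain ⟨s, hs⟩ := hyx
    have hTsub : s.offDiag.image (Function.uncurry Sym2.mk) ⊆ S.image (fun e : Edge n => e.val) := by
      intro e he
      obtain ⟨⟨a, b⟩, hp, rfl⟩ := Finset.mem_image.1 he
      obtain ⟨hp1, hp2, hne⟩ := Finset.mem_offDiag.1 hp
      have hd : ¬ (s(a, b) : Sym2 (Fin n)).IsDiag := by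
        simp only [Sym2.mk_isDiag_iff]; exact hne
      have hadj := hs.1 (Finset.mem_coe.2 hp1) (Finset.mem_coe.2 hp2) hne
      rw [graphOf_adj y hd] at hadj
      have heS : (⟨s(a, b), hd⟩ : Edge n) ∈ S := by
        by_contra hc
        simp [hy] at hadj; exact hc hadj.1
      exact Finset.mem_image.2 ⟨_, heS, rfl⟩
    calc k.choose 2 = (#s).choose 2 := by rw [hs.2]
    _ = #(s.offDiag.image (Function.uncurry Sym2.mk)) := (Sym2.card_image_offDiag s).symm
    _ ≤ #(S.image (fun e : Edge n => e.val)) := Finset.card_le_card hTsub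
    _ ≤ #S := Finset.card_image_le
  · -- 0-input: the all-but-S-complete graph is k-clique-free, use Turán
    have hx' : CLb n k x = false := by
      cases h : CLb n k x
      · rfl
      · exact absurd h hx
    set y : Edge n → Bool := fun e => if e ∈ S then x e else true with hy
    have hyx : CLb n k y = false := by
      rw [hS y (fun e he => by simp [hy, he]), hx']
    have hcf : (graphOf y).CliqueFree k := by
      intro t ht
      have : CLb n k y = true := by
        simp only [CLb, decide_eq_true_eq]; exact ⟨t, ht⟩
      rw [hyx] at this
      exact Bool.false_ne_true this
    obtain ⟨k', rfl⟩ : ∃ k', k = k' + 2 := ⟨k - 2, by omega⟩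
    have htu := turan_bound (graphOf y) hcf
    have hcount : n.choose 2 ≤ #(graphOf y).edgeFinset + #S := by
      have h1 := Finset.card_filter_add_card_filter_not
        (s := (univ : Finset (Edge n))) (p := fun e : Edge n => y e = true)
      rw [Finset.card_univ, card_edge_univ] at h1
      have h2 : (univ.filter fun e : Edge n => ¬ (y e = true)) ⊆ S := by
        intro e he
        by_contra hc
        have : y e = true := by simp [hy, hc]
        exact (Finset.mem_filter.1 he).2 this
      have h3 := Finset.card_le_card h2
      rw [card_true_edges]
      omega
    -- rational arithmetic
    have hq : (n.choose 2 : ℚ) ≤ (#(graphOf y).edgeFinset : ℚ) + #S := by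
      exact_mod_cast hcount
    have htq : 2 * ((k' : ℚ) + 1) * #(graphOf y).edgeFinset ≤ (k' : ℚ) * (n : ℚ) ^ 2 := by
      exact_mod_cast htu
    have hpos : (0 : ℚ) < 2 * ((k' : ℚ) + 1) := by positivity
    have hE : (#(graphOf y).edgeFinset : ℚ) ≤ (k' : ℚ) * (n : ℚ) ^ 2 / (2 * ((k' : ℚ) + 1)) := by
      rw [le_div_iff₀ hpos]; linarith
    have hsmall' : ((k' + 2).choose 2 : ℚ) <
        (n.choose 2 : ℚ) - (k' : ℚ) * (n : ℚ) ^ 2 / (2 * ((k' : ℚ) + 1)) := by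
      have heq : (n : ℚ) ^ 2 * (((k' : ℚ) + 2) - 2) / (2 * (((k' : ℚ) + 2) - 1))
          = (k' : ℚ) * (n : ℚ) ^ 2 / (2 * ((k' : ℚ) + 1)) := by ring_nf
      push_cast at hsmall ⊢
      push_cast at heq
      linarith [hsmall, heq.ge, heq.le]
    have : ((k' + 2).choose 2 : ℚ) < (#S : ℚ) := by linarith
    exact_mod_cast this.le


/-- For `2 ≤ k ≤ n` with `C(k,2) < C(n,2) - n²(k-2)/(2(k-1))`, the minimum
certificate complexity of the `k`-clique property is `C(k,2)`. -/
theorem clique_Cmin (n k : ℕ) (hk : 2 ≤ k) (hkn : k ≤ n)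
    (hsmall : (k.choose 2 : ℚ) <
      (n.choose 2 : ℚ) - (n : ℚ) ^ 2 * ((k : ℚ) - 2) / (2 * ((k : ℚ) - 1))) :
    Cmin (CLb n k) = k.choose 2 := by
  classical
  set f := CLb n k with hf
  -- the specific input: a clique on the first k vertices, nothing else
  set K : Finset (Fin n) := (univ : Finset (Fin k)).map (Fin.castLEEmb hkn) with hK
  have hKcard : #K = k := by simp [hK]
  have hKmem : ∀ a : Fin n, a ∈ K ↔ (a : ℕ) < k := by
    intro a
    constructor
    · intro ha
      obtain ⟨b, -, rfl⟩ := Finset.mem_map.1 ha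
      exact b.2
    · intro ha
      exact Finset.mem_map.2 ⟨⟨(a : ℕ), ha⟩, Finset.mem_univ _, by ext; simp⟩
  set x₀ : Edge n → Bool := fun e => decide (∀ a ∈ e.1, (a : ℕ) < k) with hx₀
  set S₀ : Finset (Edge n) := univ.filter (fun e => x₀ e = true) with hS₀
  have hS₀mem : ∀ e : Edge n, e ∈ S₀ ↔ ∀ a ∈ e.1, (a : ℕ) < k := by
    intro e; simp [hS₀, hx₀]
  have hcardS₀ : #S₀ = k.choose 2 := by
    have himg : S₀.image (fun e : Edge n => e.val) = K.offDiag.image (Function.uncurry Sym2.mk) := by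
      ext e
      induction e using Sym2.ind with
      | _ a b =>
        simp only [Finset.mem_image, Finset.mem_offDiag]
        constructor
        · rintro ⟨⟨e', hd⟩, hmem, rfl⟩
          replace hmem := (hS₀mem _).1 hmem
          have hne : a ≠ b := by
            intro hab; exact hd (by simp [hab])
          exact ⟨(a, b), ⟨(hKmem a).2 (hmem a (by simp)),
            (hKmem b).2 (hmem b (by simp)), hne⟩, rfl⟩
        · rintro ⟨⟨a', b'⟩, ⟨ha', hb', hne⟩, he⟩
          refine ⟨⟨s(a', b'), by simp only [Sym2.mk_isDiag_iff]; exact hne⟩, ?_, he⟩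
          refine (hS₀mem _).2 ?_
          intro c hc
          rw [Sym2.mem_iff] at hc
          rcases hc with rfl | rfl
          · exact (hKmem c).1 ha'
          · exact (hKmem c).1 hb'
    calc #S₀ = #(S₀.image (fun e : Edge n => e.val)) :=
          (Finset.card_image_of_injective _ Subtype.val_injective).symm
    _ = #(K.offDiag.image (Function.uncurry Sym2.mk)) := by rw [himg]
    _ = (#K).choose 2 := Sym2.card_image_offDiag _
    _ = k.choose 2 := by rw [hKcard]
  have hcert : IsCert f x₀ S₀ := by
    have hclique : ∀ z : Edge n → Bool, (∀ e ∈ S₀, z e = x₀ e) → f z = true := by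
      intro z hz
      simp only [hf, CLb, decide_eq_true_eq]
      refine ⟨K, ⟨?_, hKcard⟩⟩
      intro a ha b hb hne
      have hd : ¬(s(a, b) : Sym2 (Fin n)).IsDiag := by
        simp only [Sym2.mk_isDiag_iff]; exact hne
      rw [graphOf_adj z hd]
      have hmem : (⟨s(a, b), hd⟩ : Edge n) ∈ S₀ := by
        refine (hS₀mem _).2 ?_
        intro c hc
        rw [Sym2.mem_iff] at hc
        rcases hc with rfl | rfl
        · exact (hKmem c).1 ha
        · exact (hKmem c).1 hb
      rw [hz _ hmem, hx₀]
      simp only [decide_eq_true_eq]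
      intro c hc
      rw [Sym2.mem_iff] at hc
      rcases hc with rfl | rfl
      · exact (hKmem c).1 ha
      · exact (hKmem c).1 hb
    intro yy hyy
    rw [hclique yy hyy, hclique x₀ (fun _ _ => rfl)]
  have hlow : ∀ x : Edge n → Bool, k.choose 2 ≤ certC f x := by
    intro x
    have hne : {m | ∃ S : Finset (Edge n), S.card = m ∧ IsCert f x S}.Nonempty :=
      ⟨#(univ : Finset (Edge n)), univ, rfl, fun y hy => by
        have : y = x := funext fun e => hy e (Finset.mem_univ e)
        rw [this]⟩
    obtain ⟨S, hScard, hScert⟩ := Nat.sInf_mem hne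
    rw [certC, ← hScard]
    exact cert_lower n k hk hkn hsmall hScert
  have hc₀ : certC f x₀ = k.choose 2 :=
    le_antisymm (Nat.sInf_le ⟨S₀, hcardS₀, hcert⟩) (hlow x₀)
  apply le_antisymm
  · exact Nat.sInf_le ⟨x₀, hc₀⟩
  · refine le_csInf ⟨_, x₀, hc₀⟩ ?_
    rintro m ⟨x, rfl⟩
    exact hlow x
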